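/- Let u = (u_k)_{k=0}^∞ and v = (v_k)_{k=0}^∞ be bounded complex sequences with u_0 = v_0. Then sup_{l ≥ 1} |F_u^4(4^{-l}) - F_v^4(4^{-l})| ≤ (64·e^{2/3}/165) · sup_{k ≥ 0} |u_k - v_k|; moreover 64·e^{2/3}/165 < 1. -/

import Mathlib

/-- `Wprod β z = ∏_{j=0}^∞ (1 - z·β^{-j})`, the entire function from the context. -/
noncomputable def Wprod (β : ℝ) (z : ℂ) : ℂ := ∏' j : ℕ, (1 - z / (β : ℂ) ^ j)

/-- `Ffun β u z = ∑_{k=0}^∞ (u_k / W_β'(β^k)) · W_β(z)/(z - β^k)`; for a bounded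
sequence `u` this agrees with the entire function `F_u^β` away from the points `β^m`
(in particular at the points `4^{-l}` used below). -/
noncomputable def Ffun (β : ℝ) (u : ℕ → ℂ) (z : ℂ) : ℂ :=
  ∑' k : ℕ, u k / deriv (Wprod β) ((β : ℂ) ^ k) * (Wprod β z / (z - (β : ℂ) ^ k))

open Filter Finset

noncomputable def Complex.abs : AbsoluteValue ℂ ℝ := NormedField.toAbsoluteValue ℂ

@[simp] lemma Complex.abs_apply (z : ℂ) : Complex.abs z = ‖z‖ := rfl

lemma Complex.norm_eq_abs (z : ℂ) : ‖z‖ = Complex.abs z := rfl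

lemma Complex.abs_ofReal (r : ℝ) : Complex.abs (r : ℂ) = |r| := by
  rw [Complex.abs_apply, Complex.norm_real, Real.norm_eq_abs]

namespace S7aux



lemma exp_neg_two_mul_le {x : ℝ} (h0 : 0 ≤ x) (h : x ≤ 1/2) :
    Real.exp (-(2*x)) ≤ 1 - x := by
  have h1 : 2*x + 1 ≤ Real.exp (2*x) := Real.add_one_le_exp _
  have h2 : Real.exp (-(2*x)) * Real.exp (2*x) = 1 := by
    rw [← Real.exp_add]; norm_num
  nlinarith [Real.exp_pos (-(2*x)), Real.exp_pos (2*x)]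

lemma neg_two_mul_le_log {x : ℝ} (h0 : 0 ≤ x) (h : x ≤ 1/2) :
    -(2*x) ≤ Real.log (1 - x) := by
  have hx : (0:ℝ) < 1 - x := by linarith
  rw [Real.le_log_iff_exp_le hx]
  exact exp_neg_two_mul_le h0 h

lemma abs_log_one_sub_le {x : ℝ} (h0 : 0 ≤ x) (h : x ≤ 1/2) :
    |Real.log (1 - x)| ≤ 2 * x := by
  have h1 := neg_two_mul_le_log h0 h
  have h2 : Real.log (1 - x) ≤ 0 := Real.log_nonpos (by linarith) (by linarith)
  rw [abs_le]; constructor <;> linarith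

/-- bounds for real infinite products of `1 - x i` with small `x i`. -/
lemma real_prod_bounds (x : ℕ → ℝ) (hx0 : ∀ i, 0 ≤ x i) (hx : ∀ i, x i ≤ 1/2)
    (hs : Summable x) (hsum : ∑' i, x i ≤ 1/3) :
    Real.exp (-(2/3)) ≤ ∏' i, (1 - x i) ∧ (∏' i, (1 - x i)) ≤ 1 ∧
      Multipliable (fun i => 1 - x i) := by
  have hpos : ∀ i, (0:ℝ) < 1 - x i := fun i => by have := hx i; linarith
  have hlog : Summable (fun i => Real.log (1 - x i)) := by
    apply Summable.of_abs
    apply Summable.of_nonneg_of_le (fun i => abs_nonneg _)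
      (fun i => abs_log_one_sub_le (hx0 i) (hx i)) (hs.mul_left 2)
  have heq : (∏' i, (1 - x i)) = Real.exp (∑' i, Real.log (1 - x i)) := by
    have := Real.rexp_tsum_eq_tprod (f := fun i => 1 - x i) hpos hlog
    exact this.symm
  have hmul : Multipliable (fun i => 1 - x i) :=
    Real.multipliable_of_summable_log hpos hlog
  refine ⟨?_, ?_, hmul⟩
  · rw [heq]
    have : -(2/3) ≤ ∑' i, Real.log (1 - x i) := by
      have h1 : ∑' i, (-(2 * x i)) ≤ ∑' i, Real.log (1 - x i) :=
        Summable.tsum_le_tsum (fun i => neg_two_mul_le_log (hx0 i) (hx i))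
          (((hs.mul_left 2).neg)) hlog
      have h2 : ∑' i, (-(2 * x i)) = -(2 * ∑' i, x i) := by
        rw [tsum_neg, tsum_mul_left]
      rw [h2] at h1
      nlinarith
    exact Real.exp_le_exp.2 this |>.trans_eq' (by rw [])
  · rw [heq]
    calc Real.exp (∑' i, Real.log (1 - x i)) ≤ Real.exp 0 := by
          apply Real.exp_le_exp.2
          apply tsum_nonpos
          exact fun i => Real.log_nonpos (by have := hx i; linarith)
            (by have := hx0 i; linarith)
      _ = 1 := Real.exp_zero


lemma hasProd_zero_of_eq_zero {f : ℕ → ℂ} (m : ℕ) (h : f m = 0) : HasProd f 0 := by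
  have hev : (fun s : Finset ℕ => ∏ i ∈ s, f i) =ᶠ[atTop] (fun _ => (0:ℂ)) := by
    filter_upwards [eventually_ge_atTop ({m} : Finset ℕ)] with s hs
    exact Finset.prod_eq_zero (hs (Finset.mem_singleton_self m)) h
  exact Tendsto.congr' hev.symm tendsto_const_nhds

lemma norm_log_le {z : ℂ} {K : ℕ} (hz : Complex.abs z ≤ (4:ℝ)^K / 2) (i : ℕ) :
    ‖Complex.log (1 - z / (4:ℂ)^(i+K))‖ ≤ (3/4) * (1/4)^i := by
  have h4 : Complex.abs ((4:ℂ)^(i+K)) = (4:ℝ)^(i+K) := by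
    rw [map_pow]; norm_num
  have hw : ‖-(z / (4:ℂ)^(i+K))‖ ≤ (1/2) * (1/4)^i := by
    rw [norm_neg]
    have h5 : ‖z / (4:ℂ)^(i+K)‖ = Complex.abs z / (4:ℝ)^(i+K) := by
      rw [Complex.norm_eq_abs, map_div₀, h4]
    rw [h5, pow_add]
    rw [div_le_iff₀ (by positivity)]
    have h1 : ((1:ℝ)/4)^i * (4:ℝ)^i = 1 := by rw [← mul_pow]; norm_num
    calc Complex.abs z ≤ (4:ℝ)^K/2 := hz
      _ ≤ 1/2 * (1/4)^i * ((4:ℝ)^i * 4^K) := by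
          rw [show (1:ℝ)/2*(1/4)^i*((4:ℝ)^i*4^K) = 1/2*((1/4)^i*(4:ℝ)^i)*4^K by ring, h1]
          linarith
  have hhalf : ‖-(z / (4:ℂ)^(i+K))‖ ≤ 1/2 := by
    nlinarith [pow_le_one₀ (show (0:ℝ) ≤ 1/4 by norm_num)
      (show (1:ℝ)/4 ≤ 1 by norm_num) (n := i)]
  have := Complex.norm_log_one_add_half_le_self (z := -(z / (4:ℂ)^(i+K))) hhalf
  rw [show (1 : ℂ) + -(z / (4:ℂ)^(i+K)) = 1 - z / (4:ℂ)^(i+K) by ring] at this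
  calc ‖Complex.log (1 - z / (4:ℂ)^(i+K))‖ ≤ 3/2 * ‖-(z / (4:ℂ)^(i+K))‖ := this
    _ ≤ 3/2 * ((1/2) * (1/4)^i) := by nlinarith [norm_nonneg (-(z / (4:ℂ)^(i+K)))]
    _ = (3/4) * (1/4)^i := by ring

lemma summable_log_tail (z : ℂ) (K : ℕ) (hz : Complex.abs z ≤ (4:ℝ)^K / 2) :
    Summable (fun i => Complex.log (1 - z / (4:ℂ)^(i+K))) :=
  Summable.of_norm_bounded
    ((summable_geometric_of_lt_one (by norm_num) (by norm_num)).mul_left (3/4))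
    (norm_log_le hz)

lemma multipliable_W_tail (z : ℂ) (K : ℕ) :
    Multipliable (fun j : ℕ => 1 - z / (4:ℂ)^(j+K)) := by
  by_cases hz : ∃ m : ℕ, z = (4:ℂ)^(m+K)
  · obtain ⟨m, rfl⟩ := hz
    exact ⟨0, hasProd_zero_of_eq_zero m (by
      rw [div_self (pow_ne_zero _ (by norm_num : (4:ℂ) ≠ 0)), sub_self])⟩
  · push_neg at hz
    have hfn : ∀ j : ℕ, (1 : ℂ) - z / (4:ℂ)^(j+K) ≠ 0 := by
      intro j h
      apply hz j
      have h4 : ((4:ℂ)^(j+K)) ≠ 0 := pow_ne_zero _ (by norm_num)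
      field_simp at h
      linear_combination -h
    obtain ⟨N, hN⟩ : ∃ N : ℕ, Complex.abs z ≤ (4:ℝ)^N / 2 := by
      obtain ⟨N, hN⟩ := pow_unbounded_of_one_lt (2 * Complex.abs z) (show (1:ℝ) < 4 by norm_num)
      exact ⟨N, by linarith⟩
    have hN' : Complex.abs z ≤ (4:ℝ)^(N+K) / 2 := by
      have : (4:ℝ)^N ≤ 4^(N+K) := pow_le_pow_right₀ (by norm_num) (by omega)
      linarith
    have hlog : Summable (fun j => Complex.log (1 - z / (4:ℂ)^(j+K))) := by
      rw [← summable_nat_add_iff N]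
      have h2 := summable_log_tail z (N+K) hN'
      apply h2.congr
      intro j
      rw [add_assoc]
    exact Complex.multipliable_of_summable_log hlog

noncomputable def Tail (K : ℕ) (z : ℂ) : ℂ := ∏' i : ℕ, (1 - z / (4:ℂ)^(i+K))

lemma W4 (z : ℂ) : Wprod 4 z = ∏' j : ℕ, (1 - z / (4:ℂ)^j) := by
  unfold Wprod; norm_num

lemma W_split (K : ℕ) (z : ℂ) :
    Wprod 4 z = (∏ i ∈ range K, (1 - z / (4:ℂ)^i)) * Tail K z := by
  rw [W4, Tail]
  exact (Multipliable.prod_mul_tprod_nat_mul'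
    (f := fun j : ℕ => 1 - z / (4:ℂ)^j) (multipliable_W_tail z K)).symm

lemma continuousAt_Tail (k : ℕ) : ContinuousAt (Tail (k+1)) ((4:ℂ)^k) := by
  set K := k + 1 with hK
  set R : ℝ := 2 * 4^k with hR
  have hRK : R = (4:ℝ)^K / 2 := by rw [hR, hK, pow_succ]; ring
  set s : Set ℂ := Metric.ball (0:ℂ) R with hs
  have hzb : ∀ z ∈ s, Complex.abs z ≤ (4:ℝ)^K / 2 := by
    intro z hz
    rw [hs, Metric.mem_ball, dist_zero_right] at hz
    rw [← hRK]
    exact le_of_lt hz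
  have habs : ∀ z ∈ s, ∀ i : ℕ, Complex.abs (z / (4:ℂ)^(i+K)) ≤ 1/2 := by
    intro z hz i
    have h4 : Complex.abs ((4:ℂ)^(i+K)) = (4:ℝ)^(i+K) := by rw [map_pow]; norm_num
    rw [map_div₀, h4, div_le_iff₀ (by positivity)]
    calc Complex.abs z ≤ (4:ℝ)^K/2 := hzb z hz
      _ ≤ 1/2 * 4^(i+K) := by
          have : (4:ℝ)^K ≤ 4^(i+K) := pow_le_pow_right₀ (by norm_num) (by omega)
          linarith
  have hne : ∀ z ∈ s, ∀ i : ℕ, (1:ℂ) - z / (4:ℂ)^(i+K) ≠ 0 := by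
    intro z hz i h
    have h1 : Complex.abs (z / (4:ℂ)^(i+K)) = 1 := by
      have : z / (4:ℂ)^(i+K) = 1 := by linear_combination -h
      rw [this, map_one]
    have := habs z hz i
    rw [h1] at this; norm_num at this
  have hslit : ∀ z ∈ s, ∀ i : ℕ, (1:ℂ) - z / (4:ℂ)^(i+K) ∈ Complex.slitPlane := by
    intro z hz i
    rw [Complex.mem_slitPlane_iff]
    left
    have h1 : (z / (4:ℂ)^(i+K)).re ≤ Complex.abs (z / (4:ℂ)^(i+K)) := Complex.re_le_norm _
    have h2 := habs z hz i
    simp only [Complex.sub_re, Complex.one_re]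
    linarith
  set S : ℂ → ℂ := fun z => ∑' i : ℕ, Complex.log (1 - z / (4:ℂ)^(i+K)) with hSdef
  have hScont : ContinuousOn S s := by
    apply continuousOn_tsum (u := fun i => (3/4) * (1/4:ℝ)^i)
    · intro i
      intro z hz
      apply ContinuousWithinAt.clog
      · exact (continuous_const.sub (continuous_id.div_const _)).continuousWithinAt
      · exact hslit z hz i
    · exact (summable_geometric_of_lt_one (by norm_num) (by norm_num)).mul_left (3/4)
    · intro i z hz
      exact norm_log_le (hzb z hz) i
  have heq : Set.EqOn (Tail K) (fun z => Complex.exp (S z)) s := by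
    intro z hz
    have := Complex.cexp_tsum_eq_tprod (f := fun i => 1 - z / (4:ℂ)^(i+K))
      (fun i => hne z hz i) (summable_log_tail z K (hzb z hz))
    exact this.symm
  have hTc : ContinuousOn (Tail K) s :=
    ContinuousOn.congr (Complex.continuous_exp.comp_continuousOn hScont) heq
  apply hTc.continuousAt
  apply Metric.isOpen_ball.mem_nhds
  rw [Metric.mem_ball, dist_zero_right, Complex.norm_eq_abs]
  have : Complex.abs ((4:ℂ)^k) = (4:ℝ)^k := by rw [map_pow]; norm_num
  rw [this, hR]
  nlinarith [pow_pos (show (0:ℝ) < 4 by norm_num) k]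

lemma hasDerivAt_W (k : ℕ) :
    HasDerivAt (Wprod 4)
      (-(((4:ℂ)^k)⁻¹) * (∏ j ∈ range k, (1 - (4:ℂ)^k / (4:ℂ)^j)) * Tail (k+1) ((4:ℂ)^k))
      ((4:ℂ)^k) := by
  rw [hasDerivAt_iff_tendsto_slope]
  set a : ℂ := (4:ℂ)^k with ha
  have ha0 : a ≠ 0 := pow_ne_zero _ (by norm_num)
  have hW : ∀ z, Wprod 4 z
      = (∏ j ∈ range k, (1 - z / (4:ℂ)^j)) * ((1 - z / a) * Tail (k+1) z) := by
    intro z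
    rw [W_split (k+1) z, Finset.prod_range_succ, ha]
    ring
  have hfa : Wprod 4 a = 0 := by
    rw [hW, div_self ha0, sub_self, zero_mul, mul_zero]
  have hcont : Tendsto
      (fun z => -(a⁻¹) * (∏ j ∈ range k, (1 - z / (4:ℂ)^j)) * Tail (k+1) z)
      (nhdsWithin a {a}ᶜ)
      (nhds (-(a⁻¹) * (∏ j ∈ range k, (1 - a / (4:ℂ)^j)) * Tail (k+1) a)) := by
    apply Tendsto.mono_left _ nhdsWithin_le_nhds
    apply ContinuousAt.tendsto
    apply ContinuousAt.mul
    · apply ContinuousAt.mul continuousAt_const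
      exact (continuous_finset_prod _ (fun j _ =>
        continuous_const.sub (continuous_id.div_const _))).continuousAt
    · exact continuousAt_Tail k
  apply hcont.congr'
  filter_upwards [self_mem_nhdsWithin] with z hz
  have hza : z - a ≠ 0 := sub_ne_zero.mpr hz
  have key : (1:ℂ) - z/a = -(z-a) * a⁻¹ := by
    field_simp
    ring
  rw [slope_def_field, hW z, hfa, sub_zero, key, eq_div_iff hza]
  ring

noncomputable def Pr : ℝ := ∏' i : ℕ, (1 - (1/4:ℝ)^(i+1))
noncomputable def QQ (k : ℕ) : ℝ := ∏ m ∈ range k, ((4:ℝ)^(m+1) - 1)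




lemma quarter_prod (m : ℕ) (hm : 1 ≤ m) :
    Real.exp (-(2/3)) ≤ ∏' i : ℕ, (1 - (1/4:ℝ)^(i+m)) ∧
      (∏' i : ℕ, (1 - (1/4:ℝ)^(i+m))) ≤ 1 ∧
      Multipliable (fun i : ℕ => 1 - (1/4:ℝ)^(i+m)) := by
  have hrw : ∀ i : ℕ, (1/4:ℝ)^(i+m) = (1/4:ℝ)^i * (1/4)^m := fun i => pow_add _ _ _
  have hmle : (1/4:ℝ)^m ≤ 1/4 := by
    calc (1/4:ℝ)^m ≤ (1/4)^1 := pow_le_pow_of_le_one (by norm_num) (by norm_num) hm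
      _ = 1/4 := pow_one _
  apply real_prod_bounds
  · intro i; positivity
  · intro i
    have h1 : (1/4:ℝ)^i ≤ 1 := pow_le_one₀ (by norm_num) (by norm_num)
    rw [hrw]
    nlinarith [pow_pos (show (0:ℝ) < 1/4 by norm_num) i, pow_pos (show (0:ℝ) < 1/4 by norm_num) m]
  · have : Summable (fun i : ℕ => (1/4:ℝ)^i * (1/4)^m) :=
      (summable_geometric_of_lt_one (by norm_num) (by norm_num)).mul_right _
    exact this.congr (fun i => (hrw i).symm)
  · have hs : Summable (fun i : ℕ => (1/4:ℝ)^i * (1/4)^m) :=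
      (summable_geometric_of_lt_one (by norm_num) (by norm_num)).mul_right _
    calc ∑' i : ℕ, (1/4:ℝ)^(i+m) = ∑' i : ℕ, (1/4:ℝ)^i * (1/4)^m := by
          exact tsum_congr (fun i => hrw i)
      _ = (∑' i : ℕ, (1/4:ℝ)^i) * (1/4)^m := tsum_mul_right
      _ = (1 - 1/4)⁻¹ * (1/4)^m := by rw [tsum_geometric_of_lt_one (by norm_num) (by norm_num)]
      _ ≤ (1 - 1/4)⁻¹ * (1/4) := by nlinarith
      _ = 1/3 := by norm_num

lemma Pr_lb : Real.exp (-(2/3)) ≤ Pr := (quarter_prod 1 le_rfl).1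
lemma Pr_ub : Pr ≤ 1 := (quarter_prod 1 le_rfl).2.1

lemma tail_val (k : ℕ) : Tail (k+1) ((4:ℂ)^k) = ((Pr : ℝ) : ℂ) := by
  rw [Tail, Pr]
  have h : ∀ i : ℕ, (1:ℂ) - (4:ℂ)^k / (4:ℂ)^(i+(k+1)) = (((1 - (1/4:ℝ)^(i+1)) : ℝ) : ℂ) := by
    intro i
    have hp : (4:ℂ)^(i+(k+1)) = 4^k * 4^(i+1) := by
      rw [show i+(k+1) = k+(i+1) by omega, pow_add]
    have h2 : ((4:ℂ)^k) ≠ 0 := pow_ne_zero _ (by norm_num)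
    rw [hp]
    push_cast
    rw [div_pow, one_pow, div_mul_cancel_left₀ h2, one_div]
  rw [tprod_congr h]
  exact ((quarter_prod 1 le_rfl).2.2.map_tprod Complex.ofRealHom Complex.continuous_ofReal).symm

lemma QQ_pos (k : ℕ) : 0 < QQ k := by
  apply Finset.prod_pos
  intro m _
  have : (4:ℝ) ≤ 4^(m+1) := by
    calc (4:ℝ) = 4^1 := (pow_one _).symm
      _ ≤ 4^(m+1) := pow_le_pow_right₀ (by norm_num) (by omega)
  linarith

lemma QQ_ge (k : ℕ) : 3 * 15^k ≤ QQ (k+1) := by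
  induction k with
  | zero => simp only [QQ, prod_range_one]; norm_num
  | succ n ih =>
    have hQ : QQ (n+1+1) = QQ (n+1) * ((4:ℝ)^(n+1+1) - 1) := by
      rw [QQ, prod_range_succ, ← QQ]
    have h16 : (16:ℝ) ≤ 4^(n+1+1) := by
      calc (16:ℝ) = 4^2 := by norm_num
        _ ≤ 4^(n+1+1) := pow_le_pow_right₀ (by norm_num) (by omega)
    have hp := QQ_pos (n+1)
    have h15 : (0:ℝ) < 15^n := by positivity
    rw [hQ]
    calc (3:ℝ) * 15^(n+1) = (3 * 15^n) * 15 := by ring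
      _ ≤ QQ (n+1) * ((4:ℝ)^(n+1+1) - 1) := by nlinarith

lemma abs_prod_ge (k : ℕ) :
    QQ k ≤ Complex.abs (∏ j ∈ range k, (1 - (4:ℂ)^k / (4:ℂ)^j)) := by
  rw [map_prod]
  rw [QQ, ← Finset.prod_range_reflect (fun m => (4:ℝ)^(m+1) - 1) k]
  apply Finset.prod_le_prod
  · intro j _
    have : (1:ℝ) ≤ 4^(k-1-j+1) := one_le_pow₀ (by norm_num)
    linarith
  · intro j hj
    rw [Finset.mem_range] at hj
    have hjk : (k - 1 - j) + 1 = k - j := by omega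
    have habs : Complex.abs ((4:ℂ)^k / (4:ℂ)^j) = (4:ℝ)^(k-j) := by
      rw [map_div₀, map_pow, map_pow]
      have h4 : Complex.abs 4 = 4 := by norm_num
      rw [h4, div_eq_mul_inv, ← pow_sub₀ (4:ℝ) (by norm_num) (le_of_lt hj)]
    have htri : Complex.abs ((4:ℂ)^k / (4:ℂ)^j) - 1
        ≤ Complex.abs (1 - (4:ℂ)^k / (4:ℂ)^j) := by
      have h := norm_sub_norm_le ((4:ℂ)^k / (4:ℂ)^j) 1
      rw [norm_one] at h
      calc Complex.abs ((4:ℂ)^k / (4:ℂ)^j) - 1 ≤ ‖(4:ℂ)^k / (4:ℂ)^j - 1‖ := h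
        _ = Complex.abs (1 - (4:ℂ)^k / (4:ℂ)^j) := by
            rw [← norm_neg]; congr 1; ring
    calc (4:ℝ)^((k-1-j)+1) - 1 = 4^(k-j) - 1 := by rw [hjk]
      _ ≤ Complex.abs (1 - (4:ℂ)^k/(4:ℂ)^j) := by rw [← habs]; exact htri

lemma deriv_W_lower (k : ℕ) :
    ((4:ℝ)^k)⁻¹ * QQ k * Real.exp (-(2/3))
      ≤ Complex.abs (deriv (Wprod 4) ((4:ℂ)^k)) := by
  rw [(hasDerivAt_W k).deriv, tail_val]
  rw [map_mul, map_mul]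
  have h1 : Complex.abs (-(((4:ℂ)^k)⁻¹)) = ((4:ℝ)^k)⁻¹ := by
    rw [map_neg_eq_map, map_inv₀, map_pow]
    norm_num
  have h2 : Complex.abs ((Pr : ℝ) : ℂ) = Pr := by
    rw [Complex.abs_ofReal, abs_of_nonneg (le_trans (le_of_lt (Real.exp_pos _)) Pr_lb)]
  rw [h1, h2]
  have h3 := abs_prod_ge k
  have h4 := QQ_pos k
  have h5 : (0:ℝ) < ((4:ℝ)^k)⁻¹ := by positivity
  have h6 := Real.exp_pos (-(2/3:ℝ))
  gcongr
  exact Pr_lb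

lemma W_at_inv (l : ℕ) (hl : 1 ≤ l) :
    Complex.abs (Wprod 4 (((4:ℂ)^l)⁻¹)) ≤ 1 := by
  rw [W4]
  have h : ∀ j : ℕ, (1:ℂ) - ((4:ℂ)^l)⁻¹/(4:ℂ)^j = (((1 - (1/4:ℝ)^(j+l)):ℝ):ℂ) := by
    intro j
    push_cast
    congr 1
    rw [one_div, inv_pow, pow_add, mul_inv, div_eq_mul_inv, mul_comm]
  rw [tprod_congr h]
  have hmul := (quarter_prod l hl).2.2
  have heq : (∏' j : ℕ, (((1 - (1/4:ℝ)^(j+l)):ℝ):ℂ))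
      = (((∏' j : ℕ, (1 - (1/4:ℝ)^(j+l))):ℝ):ℂ) :=
    (hmul.map_tprod Complex.ofRealHom Complex.continuous_ofReal).symm
  rw [heq, Complex.abs_ofReal]
  rw [abs_of_nonneg (le_trans (le_of_lt (Real.exp_pos _)) (quarter_prod l hl).1)]
  exact (quarter_prod l hl).2.1



lemma pow4_ge {n : ℕ} (hn : 1 ≤ n) : (4:ℝ) ≤ 4^n := by
  calc (4:ℝ) = 4^1 := (pow_one _).symm
    _ ≤ 4^n := pow_le_pow_right₀ (by norm_num) hn

lemma inv_pow4_le {n : ℕ} (hn : 1 ≤ n) : ((4:ℝ)^n)⁻¹ ≤ 1/4 := by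
  rw [one_div]
  exact inv_anti₀ (by norm_num) (pow4_ge hn)

lemma term_bound (l : ℕ) (hl : 1 ≤ l) (c : ℂ) (k : ℕ) :
    Complex.abs (c / deriv (Wprod 4) ((4:ℂ)^(k+1))
        * (Wprod 4 (((4:ℂ)^l)⁻¹) / ((((4:ℂ)^l)⁻¹) - (4:ℂ)^(k+1))))
      ≤ Complex.abs c * (Real.exp (2/3) * (16/45) * (1/15)^k) := by
  set z : ℂ := ((4:ℂ)^l)⁻¹ with hzdef
  set p : ℝ := (4:ℝ)^(k+1) with hpdef
  have hp4 : (4:ℝ) ≤ p := pow4_ge (by omega)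
  have hp0 : (0:ℝ) < p := by positivity
  set c1 : ℝ := p⁻¹ * QQ (k+1) * Real.exp (-(2/3)) with hc1def
  have hc1pos : 0 < c1 := by
    apply mul_pos (mul_pos (by positivity) (QQ_pos _)) (Real.exp_pos _)
  set B : ℝ := Real.exp (2/3) * (16/45) * (1/15)^k with hBdef
  have hBpos : 0 < B := by positivity
  have hzabs : Complex.abs z ≤ 1/4 := by
    rw [hzdef, map_inv₀, map_pow]
    have h4 : Complex.abs 4 = 4 := by norm_num
    rw [h4]
    exact inv_pow4_le hl
  have hD := deriv_W_lower (k+1)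
  set D : ℝ := Complex.abs (deriv (Wprod 4) ((4:ℂ)^(k+1))) with hDdef
  have hD0 : 0 < D := lt_of_lt_of_le hc1pos hD
  set Z : ℝ := Complex.abs (z - (4:ℂ)^(k+1)) with hZdef
  have hZ : p - 1/4 ≤ Z := by
    have h := norm_sub_norm_le ((4:ℂ)^(k+1)) z
    have h1 : ‖((4:ℂ)^(k+1))‖ = p := by
      rw [Complex.norm_eq_abs, map_pow]; norm_num [hpdef]
    have h2 : ‖(4:ℂ)^(k+1) - z‖ = Z := by
      rw [norm_sub_rev, hZdef, Complex.norm_eq_abs]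
    rw [h1, h2] at h
    have h3 : ‖z‖ ≤ 1/4 := by rw [Complex.norm_eq_abs]; exact hzabs
    linarith
  have hZ0 : 0 < Z := by linarith
  have hW1 : Complex.abs (Wprod 4 z) ≤ 1 := W_at_inv l hl
  have hexp : Real.exp (2/3) * Real.exp (-(2/3)) = 1 := by
    rw [← Real.exp_add]; norm_num
  have h15 : ((1:ℝ)/15)^k * 15^k = 1 := by rw [← mul_pow]; norm_num
  have hA3 : (3:ℝ) ≤ (1/15)^k * QQ (k+1) := by
    have h := mul_le_mul_of_nonneg_left (QQ_ge k) (le_of_lt (pow_pos (show (0:ℝ) < 1/15 by norm_num) k))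
    calc (3:ℝ) = ((1:ℝ)/15)^k * (3 * 15^k) := by
          rw [show ((1:ℝ)/15)^k * (3 * 15^k) = 3 * (((1:ℝ)/15)^k * 15^k) by ring, h15]; ring
      _ ≤ (1/15)^k * QQ (k+1) := h
  have hpinv : p⁻¹ ≤ 1/4 := inv_pow4_le (by omega)
  have hB1516 : (15/16:ℝ) ≤ p⁻¹ * (p - 1/4) := by
    have h0 : p⁻¹ * (p - 1/4) = 1 - (1/4) * p⁻¹ := by
      field_simp
    rw [h0]
    nlinarith [inv_pos.mpr hp0]
  have key : 1 ≤ B * (D * Z) := by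
    have step1 : (1:ℝ) ≤ B * (c1 * (p - 1/4)) := by
      have heq2 : B * (c1 * (p - 1/4))
          = (16/45) * ((1/15)^k * QQ (k+1)) * (p⁻¹*(p-1/4))
              * (Real.exp (2/3) * Real.exp (-(2/3))) := by
        rw [hBdef, hc1def]; ring
      rw [heq2, hexp, mul_one]
      calc (1:ℝ) = (16/45) * 3 * (15/16) := by norm_num
        _ ≤ (16/45) * ((1/15)^k * QQ (k+1)) * (p⁻¹*(p-1/4)) := by
            gcongr
    calc (1:ℝ) ≤ B * (c1 * (p - 1/4)) := step1
      _ ≤ B * (D * Z) := by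
          gcongr <;> first | exact hD | exact hZ | linarith
  rw [map_mul, map_div₀, map_div₀, ← hDdef, ← hZdef]
  rw [div_mul_div_comm, div_le_iff₀ (by positivity)]
  have habsc : 0 ≤ Complex.abs c := AbsoluteValue.nonneg _ _
  have hWnn : 0 ≤ Complex.abs (Wprod 4 z) := AbsoluteValue.nonneg _ _
  nlinarith [mul_le_mul_of_nonneg_left (le_trans hW1 key) habsc]

noncomputable def bb : ℕ → ℝ :=
  fun k => if k = 0 then 0 else Real.exp (2/3) * (16/45) * (1/15)^(k-1)

lemma bb_zero : bb 0 = 0 := rfl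
lemma bb_succ (k : ℕ) : bb (k+1) = Real.exp (2/3) * (16/45) * (1/15)^k := by
  simp [bb]

lemma bb_summable : Summable bb := by
  rw [← summable_nat_add_iff 1]
  have : Summable (fun k : ℕ => Real.exp (2/3) * (16/45) * (1/15)^k) := by
    apply Summable.mul_left
    exact summable_geometric_of_lt_one (by norm_num) (by norm_num)
  exact this.congr (fun k => (bb_succ k).symm)

lemma bb_tsum : ∑' k, bb k = Real.exp (2/3) * (8/21) := by
  rw [Summable.tsum_eq_zero_add bb_summable, bb_zero, zero_add]
  have h1 : ∑' k : ℕ, bb (k+1) = Real.exp (2/3) * (16/45) * (1 - 1/15)⁻¹ := by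
    calc ∑' k : ℕ, bb (k+1) = ∑' k : ℕ, Real.exp (2/3) * (16/45) * (1/15)^k :=
          tsum_congr bb_succ
      _ = Real.exp (2/3) * (16/45) * ∑' k : ℕ, ((1:ℝ)/15)^k := by
          rw [tsum_mul_left]
      _ = Real.exp (2/3) * (16/45) * (1 - 1/15)⁻¹ := by
          rw [tsum_geometric_of_lt_one (by norm_num) (by norm_num)]
  rw [h1]
  have h2 : ((1:ℝ) - 1/15)⁻¹ = 15/14 := by norm_num
  rw [h2]; ring

lemma Ffun_eq (u : ℕ → ℂ) (z : ℂ) :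
    Ffun 4 u z = ∑' k : ℕ, u k / deriv (Wprod 4) ((4:ℂ)^k)
      * (Wprod 4 z / (z - (4:ℂ)^k)) := by
  have h : (((4:ℝ)):ℂ) = 4 := by norm_num
  simp only [Ffun, h]

lemma summable_norm_terms (l : ℕ) (hl : 1 ≤ l) (c : ℕ → ℂ) (C : ℝ)
    (hC : ∀ k, Complex.abs (c k) ≤ C) :
    Summable (fun k : ℕ => Complex.abs (c k / deriv (Wprod 4) ((4:ℂ)^k)
      * (Wprod 4 (((4:ℂ)^l)⁻¹) / ((((4:ℂ)^l)⁻¹) - (4:ℂ)^k)))) := by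
  have hC0 : 0 ≤ C := le_trans (AbsoluteValue.nonneg _ _) (hC 0)
  rw [← summable_nat_add_iff 1]
  apply Summable.of_nonneg_of_le (fun k => AbsoluteValue.nonneg _ _)
    (f := fun k => C * (Real.exp (2/3) * (16/45) * (1/15)^k))
  · intro k
    calc Complex.abs (c (k+1) / deriv (Wprod 4) ((4:ℂ)^(k+1))
          * (Wprod 4 (((4:ℂ)^l)⁻¹) / ((((4:ℂ)^l)⁻¹) - (4:ℂ)^(k+1))))
        ≤ Complex.abs (c (k+1)) * (Real.exp (2/3) * (16/45) * (1/15)^k) :=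
          term_bound l hl (c (k+1)) k
      _ ≤ C * (Real.exp (2/3) * (16/45) * (1/15)^k) := by
          apply mul_le_mul_of_nonneg_right (hC _)
          positivity
  · have : Summable (fun k : ℕ => (C * (Real.exp (2/3) * (16/45))) * (1/15)^k) :=
      Summable.mul_left _ (summable_geometric_of_lt_one (by norm_num) (by norm_num))
    exact this.congr (fun k => by ring)

end S7aux


open S7aux

/-- for bounded complex sequences u, v with u₀ = v₀,
sup_{l ≥ 1} |F_u⁴(4^{-l}) - F_v⁴(4^{-l})| ≤ (64·e^{2/3}/165) · sup_{k ≥ 0} |u_k - v_k|,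
and 64·e^{2/3}/165 < 1. -/
theorem statement7 (u v : ℕ → ℂ)
    (hu : ∃ C : ℝ, ∀ k : ℕ, ‖u k‖ ≤ C)
    (hv : ∃ C : ℝ, ∀ k : ℕ, ‖v k‖ ≤ C)
    (h0 : u 0 = v 0) :
    (∀ l : ℕ, 1 ≤ l →
      ‖Ffun 4 u (((4 : ℂ) ^ l)⁻¹) - Ffun 4 v (((4 : ℂ) ^ l)⁻¹)‖
        ≤ 64 * Real.exp (2 / 3) / 165 * ⨆ k : ℕ, ‖u k - v k‖) ∧
    64 * Real.exp (2 / 3) / 165 < 1 := by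
  obtain ⟨Cu, hCu⟩ := hu
  obtain ⟨Cv, hCv⟩ := hv
  constructor
  · intro l hl
    set z : ℂ := ((4:ℂ)^l)⁻¹ with hzdef
    set M : ℝ := ⨆ k : ℕ, ‖u k - v k‖ with hMdef
    have habs_sub : ∀ k, Complex.abs (u k - v k) ≤ Cu + Cv := by
      intro k
      rw [← Complex.norm_eq_abs]
      refine (norm_sub_le _ _).trans ?_
      rw [Complex.norm_eq_abs, Complex.norm_eq_abs]
      exact add_le_add (hCu k) (hCv k)
    have hbdd : BddAbove (Set.range fun k => Complex.abs (u k - v k)) := by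
      refine ⟨Cu + Cv, ?_⟩
      rintro x ⟨k, rfl⟩
      exact habs_sub k
    have hM : ∀ k, Complex.abs (u k - v k) ≤ M := fun k => le_ciSup hbdd k
    have hM0 : 0 ≤ M := le_trans (AbsoluteValue.nonneg _ _) (hM 0)
    have hsu_norm := summable_norm_terms l hl u Cu hCu
    have hsv_norm := summable_norm_terms l hl v Cv hCv
    have hsu : Summable (fun k : ℕ => u k / deriv (Wprod 4) ((4:ℂ)^k)
        * (Wprod 4 z / (z - (4:ℂ)^k))) := Summable.of_norm hsu_norm
    have hsv : Summable (fun k : ℕ => v k / deriv (Wprod 4) ((4:ℂ)^k)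
        * (Wprod 4 z / (z - (4:ℂ)^k))) := Summable.of_norm hsv_norm
    have hsum_uv : Summable (fun k : ℕ => ‖(u k - v k) / deriv (Wprod 4) ((4:ℂ)^k)
        * (Wprod 4 z / (z - (4:ℂ)^k))‖) :=
      summable_norm_terms l hl (fun k => u k - v k) (Cu + Cv) habs_sub
    have hFF : Ffun 4 u z - Ffun 4 v z
        = ∑' k : ℕ, ((u k - v k) / deriv (Wprod 4) ((4:ℂ)^k)
            * (Wprod 4 z / (z - (4:ℂ)^k))) := by
      rw [Ffun_eq, Ffun_eq, ← Summable.tsum_sub hsu hsv]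
      exact tsum_congr (fun k => by rw [sub_div, sub_mul])
    rw [hFF]
    have h1 : ‖∑' k : ℕ, ((u k - v k) / deriv (Wprod 4) ((4:ℂ)^k)
          * (Wprod 4 z / (z - (4:ℂ)^k)))‖
        ≤ ∑' k : ℕ, ‖(u k - v k) / deriv (Wprod 4) ((4:ℂ)^k)
          * (Wprod 4 z / (z - (4:ℂ)^k))‖ := norm_tsum_le_tsum_norm hsum_uv
    have h2 : ∑' k : ℕ, ‖(u k - v k) / deriv (Wprod 4) ((4:ℂ)^k)
          * (Wprod 4 z / (z - (4:ℂ)^k))‖ ≤ ∑' k : ℕ, M * bb k := by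
      apply Summable.tsum_le_tsum _ hsum_uv (bb_summable.mul_left M)
      intro k
      rw [Complex.norm_eq_abs]
      cases k with
      | zero =>
        have huv : u 0 - v 0 = 0 := by rw [h0, sub_self]
        rw [huv, bb_zero]
        simp
      | succ n =>
        rw [bb_succ]
        calc Complex.abs ((u (n+1) - v (n+1)) / deriv (Wprod 4) ((4:ℂ)^(n+1))
              * (Wprod 4 z / (z - (4:ℂ)^(n+1))))
            ≤ Complex.abs (u (n+1) - v (n+1)) * (Real.exp (2/3) * (16/45) * (1/15)^n) :=
              term_bound l hl _ n
          _ ≤ M * (Real.exp (2/3) * (16/45) * (1/15)^n) :=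
              mul_le_mul_of_nonneg_right (hM (n+1)) (by positivity)
    have h3 : ∑' k : ℕ, M * bb k = M * (Real.exp (2/3) * (8/21)) := by
      rw [tsum_mul_left, bb_tsum]
    have h4 : M * (Real.exp (2/3) * (8/21)) ≤ 64 * Real.exp (2/3) / 165 * M := by
      nlinarith [Real.exp_pos (2/3:ℝ), hM0, mul_nonneg hM0 (Real.exp_pos (2/3:ℝ)).le]
    linarith
  · have h1 : Real.exp (2/3) ^ 3 = Real.exp 2 := by
      rw [← Real.exp_nat_mul]; norm_num
    have h2 : Real.exp 1 ^ 2 = Real.exp 2 := by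
      rw [← Real.exp_nat_mul]; norm_num
    have h3 := Real.exp_one_lt_d9
    have h4 : Real.exp (2/3) ^ 3 < (165/64)^3 := by
      rw [h1, ← h2]
      nlinarith [Real.exp_pos 1]
    have h5 : Real.exp (2/3) < 165/64 :=
      lt_of_pow_lt_pow_left₀ 3 (by norm_num) h4
    linarith
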